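/- Let h : ℝⁿ → ℝ be continuously differentiable, let f : ℝⁿ → ℝⁿ, u : ℝⁿ → ℝᵐ, and g : ℝⁿ → (ℝᵐ →L ℝⁿ) be continuous, let ψ₁, …, ψ_p : ℝⁿ → ℝⁿ (p ≥ 1) be continuous, and let γ : ℝ → ℝ be a locally Lipschitz extended class-K function. Suppose that for all x ∈ ℝⁿ, ⟪∇h(x), f(x) + g(x)(u(x))⟫ ≥ -γ(h(x)) - min_{1 ≤ i ≤ p} ⟪∇h(x), ψᵢ(x)⟫. Then for every differentiable curve x : [0, t₁] → ℝⁿ satisfying the differential inclusion x′(t) - f(x(t)) - g(x(t))(u(x(t))) ∈ convexHull{ψ₁(x(t)), …, ψ_p(x(t))} for all t ∈ [0, t₁], the condition h(x(0)) ≥ 0 implies h(x(t)) ≥ 0 for all t ∈ [0, t₁]. -/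

import Mathlib

open scoped RealInnerProductSpace

/-- **Forward invariance under a robust control barrier function (RCBF).**
If `h` is a continuously differentiable RCBF for the disturbed system
`ẋ ∈ f(x) + g(x)u(x) + co{ψ₁(x), …, ψ_p(x)}`, i.e. the robust barrier inequality
holds for all states, then along every differentiable trajectory of the
differential inclusion, `h(x(0)) ≥ 0` implies `h(x(t)) ≥ 0` for all `t ∈ [0, t₁]`. -/
theorem rcbf_forward_invariance {n m p : ℕ} (hp : 0 < p)
    (h : EuclideanSpace ℝ (Fin n) → ℝ) (hh : ContDiff ℝ 1 h)
    (f : EuclideanSpace ℝ (Fin n) → EuclideanSpace ℝ (Fin n)) (hf : Continuous f)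
    (u : EuclideanSpace ℝ (Fin n) → EuclideanSpace ℝ (Fin m)) (hu : Continuous u)
    (g : EuclideanSpace ℝ (Fin n) → (EuclideanSpace ℝ (Fin m) →L[ℝ] EuclideanSpace ℝ (Fin n)))
    (hg : Continuous g)
    (ψ : Fin p → EuclideanSpace ℝ (Fin n) → EuclideanSpace ℝ (Fin n))
    (hψ : ∀ i, Continuous (ψ i))
    (γ : ℝ → ℝ) (hγlip : LocallyLipschitz γ) (hγcont : Continuous γ)
    (hγmono : StrictMono γ) (hγ0 : γ 0 = 0)
    (hRCBF : ∀ x : EuclideanSpace ℝ (Fin n),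
      ⟪gradient h x, f x + g x (u x)⟫ ≥
        -γ (h x) - Finset.univ.inf' ⟨⟨0, hp⟩, Finset.mem_univ _⟩
          (fun i : Fin p => ⟪gradient h x, ψ i x⟫))
    (t₁ : ℝ) (x x' : ℝ → EuclideanSpace ℝ (Fin n))
    (hx : ∀ t ∈ Set.Icc (0 : ℝ) t₁, HasDerivAt x (x' t) t)
    (hincl : ∀ t ∈ Set.Icc (0 : ℝ) t₁,
      x' t - f (x t) - g (x t) (u (x t)) ∈
        convexHull ℝ (Set.range fun i : Fin p => ψ i (x t)))
    (h0 : h (x 0) ≥ 0) :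
    ∀ t ∈ Set.Icc (0 : ℝ) t₁, h (x t) ≥ 0 := by
  set φ : ℝ → ℝ := fun t => h (x t) with hφ
  set φ' : ℝ → ℝ := fun t => ⟪gradient h (x t), x' t⟫ with hφ'
  -- the chain rule
  have hderiv : ∀ t ∈ Set.Icc (0 : ℝ) t₁, HasDerivAt φ (φ' t) t := by
    intro t ht
    have hd : DifferentiableAt ℝ h (x t) := (hh.differentiable one_ne_zero).differentiableAt
    have hgr := hd.hasGradientAt.hasFDerivAt
    have := hgr.comp_hasDerivAt t (hx t ht)
    simp only [InnerProductSpace.toDual_apply_apply] at this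
    exact this
  -- the barrier inequality along the trajectory
  have hineq : ∀ t ∈ Set.Icc (0 : ℝ) t₁, φ' t ≥ -γ (φ t) := by
    intro t ht
    set v := gradient h (x t)
    set M := Finset.univ.inf' ⟨⟨0, hp⟩, Finset.mem_univ _⟩
      (fun i : Fin p => ⟪v, ψ i (x t)⟫) with hM
    set d := x' t - f (x t) - g (x t) (u (x t)) with hdd
    have hdmem := hincl t ht
    have hvd : ⟪v, d⟫ ≥ M := by
      rw [convexHull_eq] at hdmem
      obtain ⟨ι, s, w, z, hw0, hw1, hz, hsum⟩ := hdmem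
      have heq : ⟪v, d⟫ = ∑ i ∈ s, w i * ⟪v, z i⟫ := by
        rw [hdd, ← hsum]
        simp [Finset.centerMass, hw1, inner_sum, inner_smul_right]
      rw [heq]
      calc ∑ i ∈ s, w i * ⟪v, z i⟫ ≥ ∑ i ∈ s, w i * M := by
            apply Finset.sum_le_sum
            intro i hi
            obtain ⟨j, hj⟩ := hz i hi
            have : M ≤ ⟪v, z i⟫ := by
              rw [← hj]; exact Finset.inf'_le _ (Finset.mem_univ j)
            nlinarith [hw0 i hi]
        _ = M := by rw [← Finset.sum_mul, hw1, one_mul]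
    have hxeq : x' t = (f (x t) + g (x t) (u (x t))) + d := by
      rw [hdd]; abel
    have : φ' t = ⟪v, f (x t) + g (x t) (u (x t))⟫ + ⟪v, d⟫ := by
      show ⟪v, x' t⟫ = _
      rw [hxeq, inner_add_right]
    rw [this]
    have := hRCBF (x t)
    have hφt : φ t = h (x t) := rfl
    rw [hφt]
    calc ⟪v, f (x t) + g (x t) (u (x t))⟫ + ⟪v, d⟫
        ≥ (-γ (h (x t)) - M) + M := by
          exact add_le_add this hvd
      _ = -γ (h (x t)) := by ring
  -- continuity of φ on [0, t₁]
  have hφcont : ∀ t ∈ Set.Icc (0 : ℝ) t₁, ContinuousAt φ t :=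
    fun t ht => (hderiv t ht).continuousAt
  -- main invariance argument
  intro t ht
  by_contra hneg
  push_neg at hneg
  set S : Set ℝ := {s | s ∈ Set.Icc (0 : ℝ) t ∧ φ s ≥ 0} with hS
  have hsub : S ⊆ Set.Icc (0 : ℝ) t := fun s hs => hs.1
  have h0S : (0 : ℝ) ∈ S := ⟨⟨le_refl 0, ht.1⟩, h0⟩
  have hSne : S.Nonempty := ⟨0, h0S⟩
  have hbdd : BddAbove S := ⟨t, fun s hs => hs.1.2⟩
  have hconS : ContinuousOn φ (Set.Icc 0 t) := fun s hs =>
    (hφcont s ⟨hs.1, hs.2.trans ht.2⟩).continuousWithinAt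
  have hSclosed : IsClosed S := by
    have : S = Set.Icc (0:ℝ) t ∩ φ ⁻¹' (Set.Ici 0) := by
      ext s; simp [hS, Set.mem_setOf_eq, and_comm]
    rw [this]
    exact hconS.preimage_isClosed_of_isClosed isClosed_Icc isClosed_Ici
  set s₀ := sSup S with hs₀
  have hs₀S : s₀ ∈ S := hSclosed.csSup_mem hSne hbdd
  have hs₀t : s₀ ≤ t := hs₀S.1.2
  have hs₀0 : 0 ≤ s₀ := hs₀S.1.1
  have hs₀lt : s₀ < t := by
    rcases lt_or_eq_of_le hs₀t with hlt | heq
    · exact hlt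
    · exact absurd (heq ▸ hs₀S.2) (not_le.mpr hneg)
  -- on (s₀, t], φ is negative
  have hnegmid : ∀ s, s₀ < s → s ≤ t → φ s < 0 := by
    intro s hs1 hs2
    by_contra hge
    push_neg at hge
    have : s ∈ S := ⟨⟨hs₀0.trans hs1.le, hs2⟩, hge⟩
    exact absurd (le_csSup hbdd this) (not_le.mpr hs1)
  -- φ is monotone on [s₀, t]
  have hmono : MonotoneOn φ (Set.Icc s₀ t) := by
    apply monotoneOn_of_deriv_nonneg (convex_Icc s₀ t)
    · intro s hs
      exact (hφcont s ⟨hs₀0.trans hs.1, hs.2.trans ht.2⟩).continuousWithinAt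
    · intro s hs
      rw [interior_Icc] at hs
      exact ((hderiv s ⟨hs₀0.trans hs.1.le, hs.2.le.trans ht.2⟩).differentiableAt).differentiableWithinAt
    · intro s hs
      rw [interior_Icc] at hs
      have hsIcc : s ∈ Set.Icc (0:ℝ) t₁ := ⟨hs₀0.trans hs.1.le, hs.2.le.trans ht.2⟩
      rw [(hderiv s hsIcc).deriv]
      have hφneg : φ s < 0 := hnegmid s hs.1 hs.2.le
      have : γ (φ s) ≤ γ 0 := hγmono.monotone hφneg.le
      rw [hγ0] at this
      have := hineq s hsIcc
      linarith
  have := hmono ⟨le_refl s₀, hs₀t⟩ ⟨le_refl s₀, hs₀t⟩ (le_refl s₀)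
  have hfinal := hmono (Set.left_mem_Icc.mpr hs₀t) (Set.right_mem_Icc.mpr hs₀t) hs₀t
  have := hs₀S.2
  linarith
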